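/- arXiv:1003.2084 — 2 statements merged into one kernel-verified Lean document; each statement's English description precedes it below -/
import Mathlib

section
/- Let n ≥ 2 be a natural number and set α* = ((n−1)/(n+1))^(1/n) (real power). Then for every α ∈ (0,1), 1/(α^(n(n−1)/2)·(1 − α^n)) ≥ 1/(α*^(n(n−1)/2)·(1 − α*^n)); i.e., the function f(α) = 1/(α^(n(n−1)/2)·(1 − α^n)) attains its minimum over the open interval (0,1) at α = α*. -/
/-- n+1 term AM-GM specialised: if `(n-1)x + 2y = n+1` with `x,y ≥ 0`, then `x^(n-1)·y² ≤ 1`. -/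
lemma aux_amgm (n : ℕ) (hn : 2 ≤ n) (x y : ℝ) (hx : 0 ≤ x) (hy : 0 ≤ y)
    (hsum : ((n:ℝ)-1)*x + 2*y = (n:ℝ)+1) : x^(n-1) * y^2 ≤ 1 := by
  have hN2 : (2:ℝ) ≤ (n:ℝ) := by exact_mod_cast hn
  have hNp : (0:ℝ) < (n:ℝ) + 1 := by linarith
  have hw1p : (0:ℝ) ≤ ((n:ℝ)-1)/((n:ℝ)+1) := div_nonneg (by linarith) (by linarith)
  have hw2p : (0:ℝ) ≤ 2/((n:ℝ)+1) := by positivity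
  have hwsum : ((n:ℝ)-1)/((n:ℝ)+1) + 2/((n:ℝ)+1) = 1 := by field_simp; ring
  have hgm := Real.geom_mean_le_arith_mean2_weighted hw1p hw2p hx hy hwsum
  have harith : ((n:ℝ)-1)/((n:ℝ)+1) * x + 2/((n:ℝ)+1) * y = 1 := by
    rw [div_mul_eq_mul_div, div_mul_eq_mul_div, ← add_div, hsum, div_self hNp.ne']
  rw [harith] at hgm
  have hraise : (x ^ (((n:ℝ)-1)/((n:ℝ)+1)) * y ^ ((2:ℝ)/((n:ℝ)+1))) ^ ((n:ℝ)+1) ≤ 1 :=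
    Real.rpow_le_one (by positivity) hgm hNp.le
  rw [Real.mul_rpow (Real.rpow_nonneg hx _) (Real.rpow_nonneg hy _),
    ← Real.rpow_mul hx, ← Real.rpow_mul hy, div_mul_cancel₀ _ hNp.ne',
    div_mul_cancel₀ _ hNp.ne'] at hraise
  have hcast : ((n - 1 : ℕ) : ℝ) = (n:ℝ) - 1 := by
    push_cast [Nat.cast_sub (by omega : 1 ≤ n)]; ring
  rw [← hcast, Real.rpow_natCast, show ((2:ℝ)) = ((2:ℕ):ℝ) by norm_num,
    Real.rpow_natCast] at hraise
  exact_mod_cast hraise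

lemma aux_amgm_key (n : ℕ) (hn : 2 ≤ n) (t : ℝ) (ht0 : 0 < t) (ht1 : t < 1) :
    t ^ (n-1) * (1-t)^2 ≤
      ((((n:ℝ)-1)/((n:ℝ)+1))) ^ (n-1) * (1 - (((n:ℝ)-1)/((n:ℝ)+1)))^2 := by
  have hN2 : (2:ℝ) ≤ (n:ℝ) := by exact_mod_cast hn
  have hNp : (0:ℝ) < (n:ℝ) + 1 := by linarith
  have hNm : (0:ℝ) < (n:ℝ) - 1 := by linarith
  have ha0 : 0 < ((n:ℝ)-1)/((n:ℝ)+1) := div_pos hNm hNp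
  have ha1 : ((n:ℝ)-1)/((n:ℝ)+1) < 1 := by rw [div_lt_one hNp]; linarith
  have h1a : (1:ℝ) - ((n:ℝ)-1)/((n:ℝ)+1) = 2/((n:ℝ)+1) := by field_simp; ring
  have hkey := aux_amgm n hn (t / (((n:ℝ)-1)/((n:ℝ)+1))) ((1-t) / (1 - ((n:ℝ)-1)/((n:ℝ)+1)))
    (by positivity) (div_nonneg (by linarith) (by linarith))
    (by rw [h1a]; field_simp; ring)
  have h1A : (0:ℝ) < 1 - ((n:ℝ)-1)/((n:ℝ)+1) := by rw [h1a]; positivity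
  rw [← div_le_one (mul_pos (pow_pos ha0 (n-1)) (pow_pos h1A 2)), mul_div_mul_comm,
    ← div_pow, ← div_pow]
  exact hkey

/-- The average election time `f(α) = 1/(α^(n(n-1)/2)·(1 - α^n))` attains its minimum
over `α ∈ (0,1)` at the optimal parameter `α* = ((n-1)/(n+1))^(1/n)`. -/
theorem optimal_activation_parameter_minimizes (n : ℕ) (hn : 2 ≤ n) (αstar : ℝ)
    (hstar : αstar = (((n : ℝ) - 1) / ((n : ℝ) + 1)) ^ ((1 : ℝ) / (n : ℝ))) :
    ∀ α ∈ Set.Ioo (0 : ℝ) 1,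
      1 / (α ^ (n * (n - 1) / 2) * (1 - α ^ n)) ≥
        1 / (αstar ^ (n * (n - 1) / 2) * (1 - αstar ^ n)) := by
  intro α hα
  obtain ⟨hα0, hα1⟩ := hα
  have hN2 : (2:ℝ) ≤ (n:ℝ) := by exact_mod_cast hn
  have hNp : (0:ℝ) < (n:ℝ) + 1 := by linarith
  have hNm : (0:ℝ) < (n:ℝ) - 1 := by linarith
  have ha0 : 0 < ((n:ℝ)-1)/((n:ℝ)+1) := div_pos hNm hNp
  have ha1 : ((n:ℝ)-1)/((n:ℝ)+1) < 1 := by rw [div_lt_one hNp]; linarith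
  have hs0 : 0 < αstar := by rw [hstar]; positivity
  have hsn : αstar ^ n = ((n:ℝ)-1)/((n:ℝ)+1) := by
    rw [hstar, ← Real.rpow_natCast (_ ^ ((1:ℝ)/(n:ℝ))) n, ← Real.rpow_mul ha0.le,
      one_div, inv_mul_cancel₀ (by positivity : ((n:ℝ)) ≠ 0), Real.rpow_one]
  have hta : α ^ n < 1 := pow_lt_one₀ hα0.le hα1 (by omega)
  have hta0 : 0 < α ^ n := pow_pos hα0 n
  have hg : 0 < α ^ (n*(n-1)/2) * (1 - α ^ n) := by
    apply mul_pos (pow_pos hα0 _); linarith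
  have hgs : 0 < αstar ^ (n*(n-1)/2) * (1 - αstar ^ n) := by
    apply mul_pos (pow_pos hs0 _); rw [hsn]; linarith
  have h2m : n*(n-1)/2 * 2 = n * (n-1) := by
    apply Nat.div_mul_cancel
    have : Even ((n-1) * (n-1+1)) := Nat.even_mul_succ_self (n-1)
    rw [show n - 1 + 1 = n by omega, mul_comm] at this
    exact this.two_dvd
  have hsqid : ∀ x : ℝ, (x ^ (n*(n-1)/2) * (1 - x ^ n))^2 = (x^n) ^ (n-1) * (1 - x^n)^2 := by
    intro x
    rw [mul_pow, ← pow_mul, h2m, pow_mul]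
  have hkey := aux_amgm_key n hn (α ^ n) hta0 hta
  have hsq : (α ^ (n*(n-1)/2) * (1 - α ^ n))^2 ≤ (αstar ^ (n*(n-1)/2) * (1 - αstar ^ n))^2 := by
    rw [hsqid, hsqid, hsn]
    exact hkey
  exact one_div_le_one_div_of_le hg ((pow_le_pow_iff_left₀ hg.le hgs.le two_ne_zero).mp hsq)
end

section
/- The sequence n²·(1 − ((n−1)/(n+1))^(1/n)) (real power) converges, as n → ∞ over natural numbers n ≥ 2, to 2; equivalently, the optimal activation parameter 𝒜₀(n) = 1 − ((n−1)/(n+1))^(1/n) satisfies 𝒜₀(n) ~ 1 − (1/e²)^(1/n²) as n → ∞. -/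
open Filter

private lemma exp_slope' :
    Tendsto (fun x : ℝ => (Real.exp x - 1) / x) (nhdsWithin 0 {0}ᶜ) (nhds 1) := by
  have h := Real.hasDerivAt_exp 0
  rw [hasDerivAt_iff_tendsto_slope] at h
  simpa [slope_fun_def, Real.exp_zero, div_eq_inv_mul] using h

private lemma key (c : ℕ → ℝ)
    (hc2 : Tendsto (fun n : ℕ => (n:ℝ)^2 * c n) atTop (nhds (-2)))
    (hcne : ∀ᶠ n in atTop, c n ≠ 0) :
    Tendsto (fun n : ℕ => (n:ℝ)^2 * (1 - Real.exp (c n))) atTop (nhds 2) := by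
  have hsq : Tendsto (fun n : ℕ => (n:ℝ)^2) atTop atTop :=
    (tendsto_pow_atTop two_ne_zero).comp tendsto_natCast_atTop_atTop
  have hc0 : Tendsto c atTop (nhds 0) := by
    have h := hc2.mul (tendsto_inv_atTop_zero.comp hsq)
    rw [show (-2 : ℝ) * 0 = 0 by ring] at h
    refine h.congr' ?_
    filter_upwards [eventually_ge_atTop 1] with n hn
    have : ((n:ℝ)^2) ≠ 0 := by positivity
    simp only [Function.comp_apply]
    field_simp
  have hcw : Tendsto c atTop (nhdsWithin 0 {0}ᶜ) :=
    tendsto_nhdsWithin_iff.2 ⟨hc0, hcne.mono fun n hn => hn⟩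
  have hslope := exp_slope'.comp hcw
  have h := (hc2.neg).mul hslope
  rw [show -(-2 : ℝ) * 1 = 2 by ring] at h
  refine h.congr' ?_
  filter_upwards [hcne] with n hn
  have : c n ≠ 0 := hn
  simp only [Function.comp_apply]
  field_simp
  ring

private lemma nlog :
    Tendsto (fun n : ℕ => (n:ℝ) * Real.log (((n:ℝ)-1)/((n:ℝ)+1))) atTop (nhds (-2)) := by
  have h1 : Tendsto (fun x : ℝ => x * Real.log (1 + (-2)/x)) atTop (nhds (-2)) :=
    Real.tendsto_mul_log_one_add_div_atTop (-2)
  have hn1 : Tendsto (fun n : ℕ => (n:ℝ) + 1) atTop atTop :=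
    tendsto_atTop_add_const_right _ 1 tendsto_natCast_atTop_atTop
  have h2 : Tendsto (fun n : ℕ => ((n:ℝ)+1) * Real.log (((n:ℝ)-1)/((n:ℝ)+1))) atTop
      (nhds (-2)) := by
    refine (h1.comp hn1).congr' ?_
    filter_upwards [eventually_ge_atTop 1] with n hn
    have h0 : (n:ℝ) + 1 ≠ 0 := by positivity
    have : 1 + (-2)/((n:ℝ)+1) = ((n:ℝ)-1)/((n:ℝ)+1) := by field_simp; ring
    simp [Function.comp, this]
  have hlog0 : Tendsto (fun n : ℕ => Real.log (((n:ℝ)-1)/((n:ℝ)+1))) atTop (nhds 0) := by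
    have h := h2.mul (tendsto_inv_atTop_zero.comp hn1)
    rw [show (-2 : ℝ) * 0 = 0 by ring] at h
    refine h.congr' ?_
    filter_upwards [eventually_ge_atTop 1] with n hn
    have h0 : (n:ℝ) + 1 ≠ 0 := by positivity
    simp only [Function.comp_apply]
    field_simp
  have h := h2.sub hlog0
  rw [show (-2 : ℝ) - 0 = -2 by ring] at h
  refine h.congr ?_
  intro n; ring

/-- The optimal activation parameter `𝒜₀(n) = 1 - ((n-1)/(n+1))^(1/n)` satisfies
`n²·𝒜₀(n) → 2` as `n → ∞`; equivalently `𝒜₀(n) ~ 1 - (1/e²)^(1/n²)`, i.e. the ratio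
`𝒜₀(n) / (1 - exp(-2/n²))` tends to `1`. -/
theorem optimal_activation_parameter_asymptotics :
    Tendsto
        (fun n : ℕ =>
          (n : ℝ) ^ 2 *
            (1 - (((n : ℝ) - 1) / ((n : ℝ) + 1)) ^ ((1 : ℝ) / (n : ℝ)))) atTop
        (nhds 2) ∧
      Tendsto
        (fun n : ℕ =>
          (1 - (((n : ℝ) - 1) / ((n : ℝ) + 1)) ^ ((1 : ℝ) / (n : ℝ))) /
            (1 - Real.exp (-2 / (n : ℝ) ^ 2))) atTop (nhds 1) := by
  set c : ℕ → ℝ := fun n => Real.log (((n:ℝ)-1)/((n:ℝ)+1)) * ((1:ℝ)/(n:ℝ)) with hcdef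
  have hr : ∀ n : ℕ, 2 ≤ n → 0 < ((n:ℝ)-1)/((n:ℝ)+1) ∧ ((n:ℝ)-1)/((n:ℝ)+1) < 1 := by
    intro n hn
    have h2 : (2:ℝ) ≤ (n:ℝ) := by exact_mod_cast hn
    constructor
    · apply div_pos <;> linarith
    · rw [div_lt_one (by linarith)]; linarith
  have hc2 : Tendsto (fun n : ℕ => (n:ℝ)^2 * c n) atTop (nhds (-2)) := by
    refine nlog.congr' ?_
    filter_upwards [eventually_ge_atTop 1] with n hn
    have h0 : (n:ℝ) ≠ 0 := by
      have : (1:ℝ) ≤ (n:ℝ) := by exact_mod_cast hn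
      linarith
    simp only [hcdef]
    field_simp
  have hcne : ∀ᶠ n in atTop, c n ≠ 0 := by
    filter_upwards [eventually_ge_atTop 2] with n hn
    obtain ⟨h0, h1⟩ := hr n hn
    have hlog : Real.log (((n:ℝ)-1)/((n:ℝ)+1)) < 0 := Real.log_neg h0 h1
    have hinv : (0:ℝ) < 1/(n:ℝ) := by
      have hn0 : 0 < n := by omega
      positivity
    have : c n < 0 := mul_neg_of_neg_of_pos hlog hinv
    exact ne_of_lt this
  have part1exp := key c hc2 hcne
  -- c' for the exact exponent
  set c' : ℕ → ℝ := fun n => -2 / (n:ℝ)^2 with hc'def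
  have hc2' : Tendsto (fun n : ℕ => (n:ℝ)^2 * c' n) atTop (nhds (-2)) := by
    refine tendsto_const_nhds.congr' ?_
    filter_upwards [eventually_ge_atTop 1] with n hn
    have h0 : ((n:ℝ)^2) ≠ 0 := by
      have : (1:ℝ) ≤ (n:ℝ) := by exact_mod_cast hn
      positivity
    simp only [hc'def]
    field_simp
  have hcne' : ∀ᶠ n in atTop, c' n ≠ 0 := by
    filter_upwards [eventually_ge_atTop 1] with n hn
    have h0 : ((n:ℝ)^2) ≠ 0 := by
      have : (1:ℝ) ≤ (n:ℝ) := by exact_mod_cast hn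
      positivity
    simp only [hc'def]
    intro h
    rw [div_eq_zero_iff] at h
    rcases h with h | h
    · norm_num at h
    · exact h0 h
  have part2exp := key c' hc2' hcne'
  have hrw : ∀ᶠ n : ℕ in atTop,
      (((n:ℝ)-1)/((n:ℝ)+1)) ^ ((1:ℝ)/(n:ℝ)) = Real.exp (c n) := by
    filter_upwards [eventually_ge_atTop 2] with n hn
    obtain ⟨h0, _⟩ := hr n hn
    rw [Real.rpow_def_of_pos h0]
  constructor
  · refine part1exp.congr' ?_
    filter_upwards [hrw] with n h
    rw [h]
  · have h := part1exp.div part2exp (by norm_num)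
    rw [show (2:ℝ)/2 = 1 by norm_num] at h
    refine h.congr' ?_
    filter_upwards [hrw, eventually_ge_atTop 1] with n h1 hn
    have h0 : ((n:ℝ)^2) ≠ 0 := by
      have : (1:ℝ) ≤ (n:ℝ) := by exact_mod_cast hn
      positivity
    simp only [Pi.div_apply, hc'def]
    rw [h1, mul_div_mul_left _ _ h0]
end
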